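/- Let B, R > 0, Θ₀ > 0, δ₀ ∈ (0,1), r > R, and C₀, h₀ > 0. Suppose m, δ : (0, h₀) → ℝ satisfy |m(h) − BR²/(2h) − √(Θ₀·B·R²/h)| ≤ C₀ and |δ(h) − δ₀| ≤ C₀·√h for all h ∈ (0, h₀), and that δ(h) > 0. Then lim_{h→0⁺} (BR²/h)^{δ₀} · ∫₀^∞ exp(−B r² s/(2h)) · (1+s)^{m(h)−δ(h)} · s^{δ(h)−1} ds = Γ(δ₀) · (2R²/(r² − R²))^{δ₀}, where Γ is the Gamma function. -/

import Mathlib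

open MeasureTheory Real Set Filter

private lemma laplace_sub (lam p q : ℝ) (hlam : 0 < lam) :
    ∫ s in Ioi (0:ℝ), Real.exp (-(lam*s)) * (1+s)^p * s^(q-1)
      = lam^(-q) * ∫ u in Ioi (0:ℝ), Real.exp (-u) * (1+u/lam)^p * u^(q-1) := by
  have h := integral_comp_mul_left_Ioi
    (fun u => Real.exp (-u) * (1+u/lam)^p * u^(q-1)) 0 hlam
  rw [mul_zero, smul_eq_mul] at h
  have h3 : (∫ x in Ioi (0:ℝ),
        Real.exp (-(lam*x)) * (1+lam*x/lam)^p * (lam*x)^(q-1))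
      = lam^(q-1) * ∫ s in Ioi (0:ℝ), Real.exp (-(lam*s)) * (1+s)^p * s^(q-1) := by
    rw [← integral_const_mul]
    refine setIntegral_congr_fun measurableSet_Ioi (fun s hs => ?_)
    rw [mul_div_cancel_left₀ _ hlam.ne', Real.mul_rpow hlam.le (le_of_lt hs)]
    ring
  have h2 : lam^(q-1) * (∫ s in Ioi (0:ℝ), Real.exp (-(lam*s)) * (1+s)^p * s^(q-1))
      = lam⁻¹ * ∫ u in Ioi (0:ℝ), Real.exp (-u) * (1+u/lam)^p * u^(q-1) := by
    rw [← h3]; exact h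
  have hne : lam^(q-1) ≠ 0 := (Real.rpow_pos_of_pos hlam _).ne'
  have : (∫ s in Ioi (0:ℝ), Real.exp (-(lam*s)) * (1+s)^p * s^(q-1))
      = (lam^(q-1))⁻¹ * (lam⁻¹ * ∫ u in Ioi (0:ℝ), Real.exp (-u) * (1+u/lam)^p * u^(q-1)) := by
    rw [← h2, inv_mul_cancel_left₀ hne]
  rw [this, ← mul_assoc]
  congr 1
  rw [← Real.rpow_neg_one lam, ← Real.rpow_neg hlam.le, ← Real.rpow_add hlam]
  ring_nf

private lemma integrable_exp_rpow {c s : ℝ} (hc : 0 < c) (hs : 0 < s) :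
    IntegrableOn (fun u : ℝ => Real.exp (-(c*u)) * u^(s-1)) (Ioi (0:ℝ)) := by
  have h := Real.GammaIntegral_convergent hs
  have h2 : IntegrableOn (fun x : ℝ => Real.exp (-(c*x)) * (c*x)^(s-1)) (Ioi 0) := by
    have := (integrableOn_Ioi_comp_mul_left_iff
      (fun x : ℝ => Real.exp (-x) * x^(s-1)) 0 hc).mpr (by simpa using h)
    simpa using this
  have h3 := h2.const_mul (c^(1-s))
  refine IntegrableOn.congr_fun h3 (fun x hx => ?_) measurableSet_Ioi
  rw [Real.mul_rpow hc.le (le_of_lt hx)]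
  rw [show c^(1-s) * (Real.exp (-(c*x)) * (c^(s-1) * x^(s-1)))
      = (c^(1-s) * c^(s-1)) * (Real.exp (-(c*x)) * x^(s-1)) by ring,
    ← Real.rpow_add hc]
  norm_num


private lemma tendsto_zero_of_abs_le {f g : ℝ → ℝ} {l : Filter ℝ}
    (h : ∀ᶠ x in l, |f x| ≤ g x) (hg : Tendsto g l (nhds 0)) :
    Tendsto f l (nhds 0) := by
  have hg' : Tendsto (fun x => -g x) l (nhds 0) := by simpa using hg.neg
  refine tendsto_of_tendsto_of_tendsto_of_le_of_le' hg' hg ?_ ?_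
  · filter_upwards [h] with x hx; linarith [(abs_le.mp hx).1]
  · filter_upwards [h] with x hx; exact le_trans (le_abs_self _) hx


/-- under `m(h) = BR²/(2h) + √(Θ₀BR²/h) + O(1)` and `δ(h) = δ₀ + O(√h)`,
`δ(h) > 0`, for fixed `r > R` one has
`(BR²/h)^{δ₀} ∫₀^∞ e^{−Br²s/(2h)} (1+s)^{m(h)−δ(h)} s^{δ(h)−1} ds
  → Γ(δ₀)·(2R²/(r²−R²))^{δ₀}` as `h → 0⁺`. -/
theorem laplace_asymptotics_away (B R Θ₀ δ₀ r C₀ h₀ : ℝ) (hB : 0 < B) (hR : 0 < R)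
    (hΘ : 0 < Θ₀) (hδ₀ : δ₀ ∈ Set.Ioo (0 : ℝ) 1) (hr : R < r) (hC₀ : 0 < C₀) (hh₀ : 0 < h₀)
    (m δ : ℝ → ℝ)
    (hm : ∀ h ∈ Set.Ioo (0 : ℝ) h₀,
      |m h - B * R ^ 2 / (2 * h) - Real.sqrt (Θ₀ * B * R ^ 2 / h)| ≤ C₀)
    (hδ : ∀ h ∈ Set.Ioo (0 : ℝ) h₀, |δ h - δ₀| ≤ C₀ * Real.sqrt h)
    (hδpos : ∀ h ∈ Set.Ioo (0 : ℝ) h₀, 0 < δ h) :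
    Filter.Tendsto
      (fun h : ℝ => (B * R ^ 2 / h) ^ δ₀ *
        ∫ s in Set.Ioi (0 : ℝ),
          Real.exp (-(B * r ^ 2 * s / (2 * h))) * (1 + s) ^ (m h - δ h) * s ^ (δ h - 1))
      (nhdsWithin 0 (Set.Ioi 0))
      (nhds (Real.Gamma δ₀ * (2 * R ^ 2 / (r ^ 2 - R ^ 2)) ^ δ₀)) := by
  obtain ⟨hδ₀0, hδ₀1⟩ := hδ₀
  have hr0 : 0 < r := lt_trans hR hr
  set l : Filter ℝ := nhdsWithin 0 (Set.Ioi 0) with hl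
  set θ : ℝ := R^2/r^2 with hθdef
  have hθ0 : 0 < θ := by positivity
  have hR2 : R^2 < r^2 := by nlinarith
  have hθ1 : θ < 1 := (div_lt_one (by positivity)).mpr hR2
  set lam : ℝ → ℝ := fun h => B*r^2/(2*h) with hlamdef
  have evIoo : ∀ᶠ h in l, h ∈ Set.Ioo (0:ℝ) h₀ :=
    Ioo_mem_nhdsGT_of_mem ⟨le_refl 0, hh₀⟩
  have hlam_top : Tendsto lam l atTop := by
    have : Tendsto (fun h : ℝ => (B*r^2/2) * h⁻¹) l atTop :=
      tendsto_inv_nhdsGT_zero.const_mul_atTop (by positivity)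
    refine this.congr fun h => by rw [hlamdef]; ring
  have hsqrt0 : Tendsto (fun h : ℝ => Real.sqrt h) l (nhds 0) := by
    have : Tendsto (fun h : ℝ => Real.sqrt h) (nhds 0) (nhds 0) := by
      simpa using (Real.continuous_sqrt.tendsto 0)
    exact this.mono_left nhdsWithin_le_nhds
  have hδlim : Tendsto δ l (nhds δ₀) := by
    have h0 : Tendsto (fun h => δ h - δ₀) l (nhds 0) := by
      refine tendsto_zero_of_abs_le ?_ (by simpa using hsqrt0.const_mul C₀)
      filter_upwards [evIoo] with h hh
      simpa using hδ h hh
    have := h0.add_const δ₀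
    simpa using this
  -- sqrt(Θ₀BR²h) → 0
  have hsq2 : Tendsto (fun h : ℝ => Real.sqrt (Θ₀*B*R^2*h)) l (nhds 0) := by
    have h1 : Tendsto (fun h : ℝ => Θ₀*B*R^2*h) l (nhds 0) := by
      simpa [Pi.mul_def] using ((continuous_const.mul continuous_id).tendsto 0).mono_left
        (nhdsWithin_le_nhds (s := Set.Ioi (0:ℝ)))
    have := (Real.continuous_sqrt.tendsto 0).comp h1
    simpa [Function.comp_def] using this
  have hid0 : Tendsto (fun h : ℝ => h) l (nhds 0) := by
    simpa [Function.id_def] using (continuous_id.tendsto (0:ℝ)).mono_left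
      (nhdsWithin_le_nhds (s := Set.Ioi (0:ℝ)))
  have hlin0 : Tendsto
      (fun h : ℝ => (m h - B*R^2/(2*h) - Real.sqrt (Θ₀*B*R^2/h) - δ h) * h) l (nhds 0) := by
    refine tendsto_zero_of_abs_le ?_
      (by simpa using hid0.const_mul (C₀+δ₀+C₀*Real.sqrt h₀))
    filter_upwards [evIoo] with h hh
    have hh0 : 0 < h := hh.1
    have h1 : |m h - B*R^2/(2*h) - Real.sqrt (Θ₀*B*R^2/h)| ≤ C₀ := hm h hh
    have h2 : |δ h - δ₀| ≤ C₀ * Real.sqrt h := hδ h hh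
    have h3 : Real.sqrt h ≤ Real.sqrt h₀ := Real.sqrt_le_sqrt hh.2.le
    have h4 : |δ h| ≤ δ₀ + C₀ * Real.sqrt h₀ := by
      have hd := abs_sub_abs_le_abs_sub (δ h) δ₀
      have hC : C₀ * Real.sqrt h ≤ C₀ * Real.sqrt h₀ :=
        mul_le_mul_of_nonneg_left h3 hC₀.le
      rw [abs_of_pos hδ₀0] at hd
      linarith
    rw [abs_mul, abs_of_pos hh0]
    have h5 : |m h - B*R^2/(2*h) - Real.sqrt (Θ₀*B*R^2/h) - δ h| ≤ C₀+δ₀+C₀*Real.sqrt h₀ := by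
      calc |m h - B*R^2/(2*h) - Real.sqrt (Θ₀*B*R^2/h) - δ h|
          ≤ |m h - B*R^2/(2*h) - Real.sqrt (Θ₀*B*R^2/h)| + |δ h| := abs_sub _ _
        _ ≤ C₀+δ₀+C₀*Real.sqrt h₀ := by linarith
    exact mul_le_mul_of_nonneg_right h5 hh0.le
  have T1 : Tendsto (fun h => (m h - δ h) * h) l (nhds (B*R^2/2)) := by
    have key : ∀ᶠ h in l, B*R^2/2 + (Real.sqrt (Θ₀*B*R^2*h)
        + (m h - B*R^2/(2*h) - Real.sqrt (Θ₀*B*R^2/h) - δ h) * h) = (m h - δ h) * h := by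
      filter_upwards [evIoo] with h hh
      have hh0 : 0 < h := hh.1
      have hs : Real.sqrt (Θ₀*B*R^2/h) * h = Real.sqrt (Θ₀*B*R^2*h) := by
        have he : Θ₀*B*R^2*h = (Θ₀*B*R^2/h) * h^2 := by field_simp
        rw [he, Real.sqrt_mul (by positivity), Real.sqrt_sq hh0.le]
      have hBR : (B*R^2/(2*h))*h = B*R^2/2 := by field_simp
      have he2 : (m h - δ h) * h = (B*R^2/(2*h))*h + Real.sqrt (Θ₀*B*R^2/h)*h
          + (m h - B*R^2/(2*h) - Real.sqrt (Θ₀*B*R^2/h) - δ h)*h := by ring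
      rw [he2, hs, hBR]; ring
    have t : Tendsto (fun h : ℝ => B*R^2/2 + (Real.sqrt (Θ₀*B*R^2*h)
        + (m h - B*R^2/(2*h) - Real.sqrt (Θ₀*B*R^2/h) - δ h) * h)) l
        (nhds (B*R^2/2 + (0+0))) := tendsto_const_nhds.add (hsq2.add hlin0)
    simpa using (t.congr' key)
  set ρ : ℝ → ℝ := fun h => (m h - δ h) * (2*h/(B*r^2)) with hρdef
  have Tρ : Tendsto ρ l (nhds θ) := by
    have t := T1.mul_const (2/(B*r^2))
    have hv : (B*R^2/2) * (2/(B*r^2)) = θ := by rw [hθdef]; field_simp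
    rw [hv] at t
    exact t.congr fun h => by rw [hρdef]; ring
  have evρκ : ∀ᶠ h in l, ρ h ≤ (1+θ)/2 :=
    (Tρ.eventually_lt_const (by linarith)).mono fun x hx => hx.le
  have evρ0 : ∀ᶠ h in l, 0 ≤ ρ h :=
    (Tρ.eventually_const_lt hθ0).mono fun x hx => hx.le
  have evδa : ∀ᶠ h in l, δ₀/2 ≤ δ h :=
    (hδlim.eventually_const_lt (by linarith)).mono fun x hx => hx.le
  have evδb : ∀ᶠ h in l, δ h ≤ (1+δ₀)/2 :=
    (hδlim.eventually_lt_const (by linarith)).mono fun x hx => hx.le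
  -- TQ : lam ^ (δ₀ - δ h) → 1
  have TQ : Tendsto (fun h => (lam h) ^ (δ₀ - δ h)) l (nhds 1) := by
    have hlog0 : Tendsto (fun h => Real.log (lam h) * (δ₀ - δ h)) l (nhds 0) := by
      refine tendsto_zero_of_abs_le (g := fun h =>
        C₀ * Real.sqrt h * |Real.log (B*r^2/2)| + C₀ * |Real.log h * Real.sqrt h|) ?_ ?_
      · filter_upwards [evIoo] with h hh
        have hh0 : 0 < h := hh.1
        have hlam : Real.log (lam h) = Real.log (B*r^2/2) - Real.log h := by
          simp only [hlamdef]
          have : B*r^2/(2*h) = (B*r^2/2)/h := by ring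
          rw [this, Real.log_div (by positivity) hh0.ne']
        have h2 : |δ₀ - δ h| ≤ C₀ * Real.sqrt h := by
          rw [abs_sub_comm]; exact hδ h hh
        calc |Real.log (lam h) * (δ₀ - δ h)| = |Real.log (lam h)| * |δ₀ - δ h| := abs_mul _ _
          _ ≤ (|Real.log (B*r^2/2)| + |Real.log h|) * (C₀ * Real.sqrt h) := by
              refine mul_le_mul ?_ h2 (abs_nonneg _) (by positivity)
              rw [hlam]; exact abs_sub _ _
          _ = C₀ * Real.sqrt h * |Real.log (B*r^2/2)| + C₀ * (|Real.log h| * Real.sqrt h) := by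
              ring
          _ = C₀ * Real.sqrt h * |Real.log (B*r^2/2)| + C₀ * |Real.log h * Real.sqrt h| := by
              rw [abs_mul, abs_of_nonneg (Real.sqrt_nonneg h)]
      · have t1 : Tendsto (fun h : ℝ => C₀ * Real.sqrt h * |Real.log (B*r^2/2)|) l (nhds 0) := by
          simpa using (hsqrt0.const_mul C₀).mul_const |Real.log (B*r^2/2)|
        have t2 : Tendsto (fun h : ℝ => |Real.log h * Real.sqrt h|) l (nhds 0) := by
          have := (tendsto_log_mul_rpow_nhdsGT_zero (r := 1/2) (by norm_num)).abs
          rw [abs_zero] at this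
          exact this.congr fun h => by rw [Real.sqrt_eq_rpow]
        have := t1.add (t2.const_mul C₀)
        simpa using this
    have : Tendsto (fun h => Real.exp (Real.log (lam h) * (δ₀ - δ h))) l (nhds 1) := by
      have := (Real.continuous_exp.tendsto 0).comp hlog0
      simpa [Function.comp_def] using this
    refine this.congr' ?_
    filter_upwards [evIoo] with h hh
    have hh0 : 0 < h := hh.1
    have hlampos : 0 < lam h := by simp only [hlamdef]; positivity
    rw [Real.rpow_def_of_pos hlampos]
  -- dominated convergence
  set κ : ℝ := (1+θ)/2 with hκdef
  have h1κ : 0 < 1 - κ := by rw [hκdef]; linarith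
  set a : ℝ := δ₀/2 with hadef
  set b : ℝ := (1+δ₀)/2 with hbdef
  have ha0 : 0 < a := by rw [hadef]; linarith
  have hb0 : 0 < b := by rw [hbdef]; linarith
  set F : ℝ → ℝ → ℝ :=
    fun h u => Real.exp (-u) * (1+u/lam h)^(m h - δ h) * u^(δ h - 1) with hFdef
  set flim : ℝ → ℝ := fun u => Real.exp (-((1-θ)*u)) * u^(δ₀-1) with hflimdef
  have TJ : Tendsto (fun h => ∫ u in Ioi (0:ℝ), F h u) l
      (nhds (∫ u in Ioi (0:ℝ), flim u)) := by
    refine tendsto_integral_filter_of_dominated_convergence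
      (fun u => Real.exp (-((1-κ)*u)) * (u^(a-1) + u^(b-1))) ?_ ?_ ?_ ?_
    · filter_upwards [evIoo] with h hh
      refine Measurable.aestronglyMeasurable ?_
      simp only [hFdef]
      fun_prop
    · filter_upwards [evIoo, evρκ, evρ0, evδa, evδb] with h hh hρκ hρ0 hδa hδb
      refine (ae_restrict_mem measurableSet_Ioi).mono fun u hu => ?_
      have hu0 : (0:ℝ) < u := hu
      have hh0 : 0 < h := hh.1
      have hlampos : 0 < lam h := by simp only [hlamdef]; positivity
      have hbase : 0 < 1 + u/lam h := by positivity
      have hmδ : m h - δ h = ρ h * lam h := by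
        simp only [hρdef, hlamdef]
        field_simp
      have hmδ0 : 0 ≤ m h - δ h := by rw [hmδ]; exact mul_nonneg hρ0 hlampos.le
      have hFnn : 0 ≤ F h u := by
        simp only [hFdef]
        exact mul_nonneg (mul_nonneg (Real.exp_pos _).le
          (Real.rpow_nonneg hbase.le _)) (Real.rpow_nonneg hu0.le _)
      rw [Real.norm_eq_abs, abs_of_nonneg hFnn]
      have hb1 : (1+u/lam h)^(m h - δ h) ≤ Real.exp (κ*u) := by
        rw [Real.rpow_def_of_pos hbase]
        refine Real.exp_le_exp.mpr ?_
        have hlog : Real.log (1+u/lam h) ≤ u/lam h := by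
          have := Real.log_le_sub_one_of_pos hbase; linarith
        have e1 : u/lam h * (m h - δ h) = ρ h * u := by
          rw [hmδ]; field_simp
        calc Real.log (1+u/lam h) * (m h - δ h)
            ≤ u/lam h * (m h - δ h) := mul_le_mul_of_nonneg_right hlog hmδ0
          _ = ρ h * u := e1
          _ ≤ κ*u := mul_le_mul_of_nonneg_right hρκ hu0.le
      have hb2 : u^(δ h - 1) ≤ u^(a-1) + u^(b-1) := by
        rcases le_total u 1 with h1 | h1
        · have h2 : u^(δ h - 1) ≤ u^(a-1) :=
            Real.rpow_le_rpow_of_exponent_ge hu0 h1 (by linarith)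
          have h3 : 0 ≤ u^(b-1) := Real.rpow_nonneg hu0.le _
          linarith
        · have h2 : u^(δ h - 1) ≤ u^(b-1) :=
            Real.rpow_le_rpow_of_exponent_le h1 (by linarith)
          have h3 : 0 ≤ u^(a-1) := Real.rpow_nonneg hu0.le _
          linarith
      have hexp : Real.exp (-u) * Real.exp (κ*u) = Real.exp (-((1-κ)*u)) := by
        rw [← Real.exp_add]; congr 1; ring
      calc F h u = Real.exp (-u) * (1+u/lam h)^(m h - δ h) * u^(δ h - 1) := rfl
        _ ≤ Real.exp (-u) * Real.exp (κ*u) * (u^(a-1) + u^(b-1)) := by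
            refine mul_le_mul ?_ hb2 (Real.rpow_nonneg hu0.le _) (by positivity)
            exact mul_le_mul_of_nonneg_left hb1 (Real.exp_pos _).le
        _ = Real.exp (-((1-κ)*u)) * (u^(a-1) + u^(b-1)) := by rw [hexp]
    · have i1 := integrable_exp_rpow h1κ ha0
      have i2 := integrable_exp_rpow h1κ hb0
      have := i1.add i2
      refine this.congr (Eventually.of_forall fun u => ?_)
      simp only [Pi.add_apply]
      ring
    · refine (ae_restrict_mem measurableSet_Ioi).mono fun u hu => ?_
      have hu0 : (0:ℝ) < u := hu
      have t0 : Tendsto (fun h => lam h * Real.log (1 + u / lam h)) l (nhds u) :=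
        (Real.tendsto_mul_log_one_add_div_atTop u).comp hlam_top
      have t1 : Tendsto (fun h => ρ h * (lam h * Real.log (1+u/lam h))) l (nhds (θ*u)) :=
        Tρ.mul t0
      have Tb : Tendsto (fun h => (1+u/lam h)^(m h - δ h)) l (nhds (Real.exp (θ*u))) := by
        have t2 := (Real.continuous_exp.tendsto (θ*u)).comp t1
        refine t2.congr' ?_
        filter_upwards [evIoo] with h hh
        have hh0 : 0 < h := hh.1
        have hlampos : 0 < lam h := by simp only [hlamdef]; positivity
        have hbase : 0 < 1 + u/lam h := by positivity
        have hmδ : m h - δ h = ρ h * lam h := by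
          simp only [hρdef, hlamdef]; field_simp
        show Real.exp (ρ h * (lam h * Real.log (1+u/lam h))) = (1+u/lam h)^(m h - δ h)
        rw [Real.rpow_def_of_pos hbase, hmδ]
        congr 1
        ring
      have Tc : Tendsto (fun h => u^(δ h - 1)) l (nhds (u^(δ₀-1))) := by
        have t3 : Tendsto (fun h => Real.exp (Real.log u * (δ h - 1))) l
            (nhds (Real.exp (Real.log u * (δ₀-1)))) :=
          (Real.continuous_exp.tendsto _).comp (tendsto_const_nhds.mul (hδlim.sub_const 1))
        have : (fun h => Real.exp (Real.log u * (δ h - 1))) = fun h => u^(δ h - 1) :=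
          funext fun h => (Real.rpow_def_of_pos hu0 _).symm
        rw [this, ← Real.rpow_def_of_pos hu0] at t3
        exact t3
      have tall := (tendsto_const_nhds (x := Real.exp (-u)) (f := l)).mul Tb |>.mul Tc
      have hval : Real.exp (-u) * Real.exp (θ*u) * u^(δ₀-1) = flim u := by
        simp only [hflimdef, ← Real.exp_add]
        congr 2
        ring
      rw [hval] at tall
      exact tall
  -- evaluate limit integral
  have h1θ : 0 < 1 - θ := by linarith
  have Jval : (∫ u in Ioi (0:ℝ), flim u) = Real.Gamma δ₀ * (1-θ)^(-δ₀) := by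
    have hls := laplace_sub (1-θ) 0 δ₀ h1θ
    simp only [Real.rpow_zero, mul_one] at hls
    simp only [hflimdef]
    rw [hls, ← Real.Gamma_eq_integral hδ₀0]
    ring
  rw [Jval] at TJ
  -- final assembly
  have Tfinal : Tendsto (fun h => (2*R^2/r^2)^δ₀ * (lam h)^(δ₀ - δ h)
      * (∫ u in Ioi (0:ℝ), F h u)) l
      (nhds ((2*R^2/r^2)^δ₀ * 1 * (Real.Gamma δ₀ * (1-θ)^(-δ₀)))) :=
    (tendsto_const_nhds.mul TQ).mul TJ
  have hvaleq : (2*R^2/r^2)^δ₀ * 1 * (Real.Gamma δ₀ * (1-θ)^(-δ₀))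
      = Real.Gamma δ₀ * (2*R^2/(r^2-R^2))^δ₀ := by
    have hr2 : (0:ℝ) < r^2 - R^2 := by linarith
    have key : (2*R^2/r^2)^δ₀ * (1-θ)^(-δ₀) = (2*R^2/(r^2-R^2))^δ₀ := by
      rw [Real.rpow_neg h1θ.le, ← Real.inv_rpow h1θ.le,
        ← Real.mul_rpow (by positivity) (by positivity)]
      congr 1
      rw [hθdef]
      field_simp
    rw [mul_one, ← key]
    ring
  rw [hvaleq] at Tfinal
  have heq : (fun h => (2*R^2/r^2)^δ₀ * (lam h)^(δ₀ - δ h) * (∫ u in Ioi (0:ℝ), F h u))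
      =ᶠ[l] (fun h : ℝ => (B * R ^ 2 / h) ^ δ₀ *
        ∫ s in Set.Ioi (0 : ℝ),
          Real.exp (-(B * r ^ 2 * s / (2 * h))) * (1 + s) ^ (m h - δ h) * s ^ (δ h - 1)) := by
    filter_upwards [evIoo] with h hh
    have hh0 : 0 < h := hh.1
    have hlampos : 0 < lam h := by simp only [hlamdef]; positivity
    have hint : (∫ s in Set.Ioi (0 : ℝ),
        Real.exp (-(B * r ^ 2 * s / (2 * h))) * (1 + s) ^ (m h - δ h) * s ^ (δ h - 1))
        = (lam h)^(-(δ h)) * ∫ u in Ioi (0:ℝ), F h u := by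
      have harg : (fun s : ℝ => Real.exp (-(B * r ^ 2 * s / (2 * h)))
          * (1 + s) ^ (m h - δ h) * s ^ (δ h - 1))
          = fun s => Real.exp (-(lam h * s)) * (1 + s) ^ (m h - δ h) * s ^ (δ h - 1) := by
        funext s
        have harg2 : B * r ^ 2 * s / (2 * h) = lam h * s := by
          simp only [hlamdef]; ring
        rw [harg2]
      rw [harg, laplace_sub (lam h) (m h - δ h) (δ h) hlampos]
    rw [hint]
    have hfac : (B*R^2/h)^δ₀ = (2*R^2/r^2)^δ₀ * (lam h)^δ₀ := by
      rw [← Real.mul_rpow (by positivity) hlampos.le]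
      congr 1
      simp only [hlamdef]
      field_simp
    rw [hfac, show (δ₀ - δ h) = δ₀ + (-(δ h)) by ring, Real.rpow_add hlampos]
    ring
  exact Tfinal.congr' heq
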